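/- Let X ⊆ ℝ^d be nonempty, convex, and compact, let F : X → ℝ^d be Borel measurable and bounded, and suppose that for every x' ∈ X the function x ↦ ⟨F(x), x' − x⟩ is concave on X. Let ε ≥ 0 and let μ be a Borel probability measure on X such that ∫ ⟨F(x), x' − x⟩ dμ(x) ≥ −ε for all x' ∈ X (an ε-approximate EVI solution). Then the barycenter x̄ := ∫ x dμ(x) lies in X and satisfies ⟨F(x̄), x' − x̄⟩ ≥ −ε for all x' ∈ X, i.e., x̄ is an ε-approximate VI solution. -/

import Mathlib

open MeasureTheory
open scoped RealInnerProductSpace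

section Aux

variable {E : Type*} [NormedAddCommGroup E] [InnerProductSpace ℝ E]
  [FiniteDimensional ℝ E] [MeasurableSpace E] [BorelSpace E]

/-- A concave function on a convex set has a supporting affine functional at any
interior point. -/
lemma concave_exists_support {S : Set E} (hS : Convex ℝ S) {g : E → ℝ}
    (hg : ConcaveOn ℝ S g) {b : E} (hb : b ∈ interior S) :
    ∃ f : E →L[ℝ] ℝ, ∀ x ∈ S, g x ≤ g b + f (x - b) := by
  have hgint : ConcaveOn ℝ (interior S) g := hg.subset interior_subset hS.interior
  have hgc : ContinuousOn g (interior S) := hgint.continuousOn isOpen_interior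
  set U : Set (E × ℝ) := {p | p.1 ∈ interior S ∧ p.2 < g p.1} with hU
  have hUconv : Convex ℝ U := by
    rintro ⟨x, s⟩ ⟨hx, hs⟩ ⟨y, t⟩ ⟨hy, ht⟩ a c ha hc hac
    rcases eq_or_lt_of_le hc with rfl | hc'
    · simp only [add_zero] at hac
      subst hac
      simpa using ⟨hx, hs⟩
    constructor
    · exact hS.interior hx hy ha hc hac
    · show a • s + c • t < g (a • x + c • y)
      have h1 : a • s ≤ a • g x := smul_le_smul_of_nonneg_left hs.le ha
      have h2 : c • t < c • g y := by
        simp only [smul_eq_mul]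
        exact (mul_lt_mul_iff_right₀ hc').2 ht
      have h3 := hgint.2 hx hy ha hc hac
      calc a • s + c • t < a • g x + c • g y := by
            exact add_lt_add_of_le_of_lt h1 h2
        _ ≤ g (a • x + c • y) := h3
  have hUopen : IsOpen U := by
    rw [isOpen_iff_mem_nhds]
    rintro ⟨x, t⟩ ⟨hx, ht⟩
    have hcont : ContinuousAt g x := hgc.continuousAt (isOpen_interior.mem_nhds hx)
    have h1 : {y | (t + g x) / 2 < g y} ∈ nhds x := by
      have : g ⁻¹' Set.Ioi ((t + g x) / 2) ∈ nhds x :=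
        hcont (isOpen_Ioi.mem_nhds (by simp only [Set.mem_Ioi]; linarith))
      exact this
    have h2 : interior S ∈ nhds x := isOpen_interior.mem_nhds hx
    have h3 : Set.Iio ((t + g x) / 2) ∈ nhds t := Iio_mem_nhds (by linarith)
    have hprod := prod_mem_nhds (Filter.inter_mem h2 h1) h3
    refine Filter.mem_of_superset hprod ?_
    rintro ⟨y, s⟩ ⟨⟨hy1, hy2⟩, hs⟩
    exact ⟨hy1, lt_trans hs hy2⟩
  have hbU : ((b, g b) : E × ℝ) ∉ U := fun h => lt_irrefl _ h.2
  obtain ⟨φ, hφ⟩ := geometric_hahn_banach_open_point hUconv hUopen hbU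
  set f : E →L[ℝ] ℝ := φ.comp (ContinuousLinearMap.inl ℝ E ℝ) with hfdef
  set c : ℝ := φ (0, 1) with hcdef
  have hsplit : ∀ (x : E) (t : ℝ), φ (x, t) = f x + t * c := by
    intro x t
    have hxt : ((x, t) : E × ℝ) = (x, 0) + t • ((0 : E), (1 : ℝ)) := by
      simp [Prod.ext_iff]
    rw [hxt, map_add, φ.map_smul]
    simp only [hfdef, hcdef, ContinuousLinearMap.comp_apply, ContinuousLinearMap.inl_apply,
      smul_eq_mul]
  have hc : 0 < c := by
    have h := hφ (b, g b - 1) ⟨hb, show g b - 1 < g b by linarith⟩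
    rw [hsplit, hsplit] at h
    nlinarith
  have hintS : ∀ x ∈ interior S, f x + c * g x ≤ f b + c * g b := by
    intro x hx
    have key : ∀ δ : ℝ, 0 < δ → f x + (g x - δ) * c < f b + g b * c := by
      intro δ hδ
      have h := hφ (x, g x - δ) ⟨hx, show g x - δ < g x by linarith⟩
      rw [hsplit, hsplit] at h
      exact h
    by_contra hcon
    push_neg at hcon
    set δ := (f x + c * g x - (f b + c * g b)) / (2 * c) with hδdef
    have hδpos : 0 < δ := by
      apply div_pos (by linarith) (by linarith)
    have hcδ : c * δ = (f x + c * g x - (f b + c * g b)) / 2 := by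
      rw [hδdef]; field_simp
    have := key δ hδpos
    nlinarith
  refine ⟨(-c⁻¹) • f, ?_⟩
  intro x hx
  have hbS : b ∈ S := interior_subset hb
  have hmid : (1 / 2 : ℝ) • x + (1 / 2 : ℝ) • b ∈ interior S :=
    hS.combo_self_interior_mem_interior hx hb (by norm_num) (by norm_num) (by norm_num)
  have h1 := hintS _ hmid
  have h2 : (1 / 2 : ℝ) * g x + (1 / 2 : ℝ) * g b ≤ g ((1 / 2 : ℝ) • x + (1 / 2 : ℝ) • b) := by
    have := hg.2 hx hbS (by norm_num : (0:ℝ) ≤ 1/2) (by norm_num : (0:ℝ) ≤ 1/2) (by norm_num)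
    simpa [smul_eq_mul] using this
  have h3 : f ((1 / 2 : ℝ) • x + (1 / 2 : ℝ) • b) = (1 / 2) * f x + (1 / 2) * f b := by
    rw [map_add, _root_.map_smul, _root_.map_smul]; simp [smul_eq_mul]
  have hgoal : c * g x ≤ c * g b + (f b - f x) := by nlinarith
  have happ : ((-c⁻¹) • f) (x - b) = (f b - f x) / c := by
    rw [ContinuousLinearMap.smul_apply, map_sub, smul_eq_mul]
    field_simp
    ring
  rw [happ]
  have : g x - g b ≤ (f b - f x) / c := by
    rw [le_div_iff₀ hc]; nlinarith
  linarith

/-- Jensen's inequality for concave (not necessarily continuous) functions on a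
closed convex set: the integral of `g` is at most `g` of the barycenter. -/
lemma jensen_concave_aux (n : ℕ) :
    ∀ (X : Set E) (g : E → ℝ) (μ : Measure E), IsProbabilityMeasure μ →
      IsClosed X → Convex ℝ X → (∀ᵐ x ∂μ, x ∈ X) → Integrable (fun x => x) μ →
      ConcaveOn ℝ X g → Integrable g μ →
      Module.finrank ℝ (vectorSpan ℝ X) ≤ n →
      ∫ x, g x ∂μ ≤ g (∫ x, x ∂μ) := by
  induction n with
  | zero =>
    intro X g μ hprob hXc hXconv hmem hid hg hgi hrank
    have hb : (∫ x, x ∂μ) ∈ X := hXconv.integral_mem hXc hmem hid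
    have hbot : vectorSpan ℝ X = ⊥ :=
      Submodule.finrank_eq_zero.mp (Nat.le_zero.mp hrank)
    have hXeq : ∀ x ∈ X, x = ∫ x, x ∂μ := by
      intro x hx
      have hv : x -ᵥ (∫ x, x ∂μ) ∈ vectorSpan ℝ X := vsub_mem_vectorSpan ℝ hx hb
      rw [hbot, Submodule.mem_bot, vsub_eq_sub, sub_eq_zero] at hv
      exact hv
    have hcong : (fun x => g x) =ᵐ[μ] fun _ => g (∫ x, x ∂μ) :=
      hmem.mono fun x hx => by rw [hXeq x hx]
    rw [integral_congr_ae hcong, integral_const]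
    simp
  | succ n ih =>
    intro X g μ hprob hXc hXconv hmem hid hg hgi hrank
    have hb : (∫ x, x ∂μ) ∈ X := hXconv.integral_mem hXc hmem hid
    set b : E := ∫ x, x ∂μ with hbdef
    set V : Submodule ℝ E := vectorSpan ℝ X with hVdef
    set P : E → E := fun y => b + (V.orthogonalProjectionOnto (y - b) : E) with hPdef
    have hPcont : Continuous P :=
      continuous_const.add (continuous_subtype_val.comp
        ((V.orthogonalProjectionOnto).continuous.comp (continuous_id.sub continuous_const)))
    have hPcomb : ∀ (a c : ℝ), a + c = 1 → ∀ x y : E,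
        P (a • x + c • y) = a • P x + c • P y := by
      intro a c hac x y
      have hsub : a • x + c • y - b = a • (x - b) + c • (y - b) := by
        rw [smul_sub, smul_sub]
        rw [show a • x - a • b + (c • y - c • b) = a • x + c • y - (a • b + c • b) by abel]
        rw [← add_smul, hac, one_smul]
      simp only [hPdef]
      rw [hsub, map_add, _root_.map_smul, _root_.map_smul, Submodule.coe_add, Submodule.coe_smul,
        Submodule.coe_smul]
      have hbb : (a • b + c • b : E) = b := by rw [← add_smul, hac, one_smul]
      rw [smul_add, smul_add]
      rw [show b + (a • ((V.orthogonalProjectionOnto (x - b) : E)) +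
        c • ((V.orthogonalProjectionOnto (y - b) : E))) =
        (a • b + c • b) + (a • ((V.orthogonalProjectionOnto (x - b) : E)) +
          c • ((V.orthogonalProjectionOnto (y - b) : E))) by rw [hbb]]
      abel
    have hPfix : ∀ x ∈ X, P x = x := by
      intro x hx
      have hxb : x - b ∈ V := by
        have := vsub_mem_vectorSpan ℝ hx hb
        rwa [vsub_eq_sub] at this
      simp only [hPdef]
      rw [← Submodule.starProjection_apply V, Submodule.starProjection_eq_self_iff.mpr hxb]
      abel
    have hPb : P b = b := by
      simp only [hPdef, sub_self, map_zero, ZeroMemClass.coe_zero, add_zero]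
    set Xh : Set E := P ⁻¹' X with hXhdef
    have hXXh : X ⊆ Xh := fun x hx => by
      show P x ∈ X; rw [hPfix x hx]; exact hx
    have hbXh : b ∈ Xh := hXXh hb
    have hXhconv : Convex ℝ Xh := by
      intro x hx y hy a c ha hc hac
      show P (a • x + c • y) ∈ X
      rw [hPcomb a c hac]
      exact hXconv hx hy ha hc hac
    have hXhclosed : IsClosed Xh := hXc.preimage hPcont
    have hperpXh : ∀ w ∈ Vᗮ, b + w ∈ Xh := by
      intro w hw
      show P (b + w) ∈ X
      simp only [hPdef, add_sub_cancel_left]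
      rw [Submodule.orthogonalProjectionOnto_apply_of_mem_orthogonal hw]
      simpa using hb
    have hXhspan : affineSpan ℝ Xh = ⊤ := by
      rw [AffineSubspace.affineSpan_eq_top_iff_vectorSpan_eq_top_of_nonempty (k := ℝ) (V := E) (P := E) ⟨b, hbXh⟩]
      apply le_antisymm le_top
      rw [← Submodule.sup_orthogonal_of_hasOrthogonalProjection (K := V)]
      apply sup_le
      · exact le_trans (by rw [hVdef]) (vectorSpan_mono ℝ hXXh)
      · intro w hw
        have := vsub_mem_vectorSpan ℝ (hperpXh w hw) hbXh
        rwa [vsub_eq_sub, add_sub_cancel_left] at this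
    have hXhint : (interior Xh).Nonempty :=
      hXhconv.interior_nonempty_iff_affineSpan_eq_top.mpr hXhspan
    by_cases hbint : b ∈ interior Xh
    · -- supporting functional case
      set gh : E → ℝ := fun y => g (P y) with hghdef
      have hgh : ConcaveOn ℝ Xh gh := by
        refine ⟨hXhconv, ?_⟩
        intro x hx y hy a c ha hc hac
        show a • g (P x) + c • g (P y) ≤ g (P (a • x + c • y))
        rw [hPcomb a c hac]
        exact hg.2 hx hy ha hc hac
      obtain ⟨f, hf⟩ := concave_exists_support hXhconv hgh hbint
      have hae : ∀ᵐ x ∂μ, g x ≤ g b + (f x - f b) := by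
        refine hmem.mono fun x hx => ?_
        have h1 := hf x (hXXh hx)
        simp only [hghdef] at h1
        rw [hPfix x hx, hPb, map_sub] at h1
        linarith
      have hfint : Integrable (fun x : E => f x) μ := f.integrable_comp hid
      have hint2 : Integrable (fun x => g b + (f x - f b)) μ :=
        (integrable_const (g b)).add (hfint.sub (integrable_const (f b)))
      calc ∫ x, g x ∂μ ≤ ∫ x, (g b + (f x - f b)) ∂μ := integral_mono_ae hgi hint2 hae
        _ = g b := by
            have h₁ : ∫ x, (g b + (f x - f b)) ∂μ
                = ∫ _x, g b ∂μ + ∫ x, (f x - f b) ∂μ :=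
              integral_add (integrable_const _) (hfint.sub (integrable_const _))
            have h₂ : ∫ x, (f x - f b) ∂μ = (∫ x, f x ∂μ) - ∫ _x, f b ∂μ :=
              integral_sub hfint (integrable_const _)
            have h₃ : ∫ x, f x ∂μ = f b := by
              rw [hbdef]; exact f.integral_comp_comm hid
            rw [h₁, h₂, h₃, integral_const, integral_const]
            simp
    · -- separation case: dimension drops
      obtain ⟨x₀, hx₀⟩ := hXhint
      obtain ⟨f, hf⟩ := geometric_hahn_banach_open_point hXhconv.interior isOpen_interior hbint
      have hfle : ∀ x ∈ Xh, f x ≤ f b := by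
        intro x hx
        by_contra hcon
        push_neg at hcon
        have hfx₀ : f x₀ < f b := hf x₀ hx₀
        have hD : 0 < f x - f x₀ := by linarith
        set lam : ℝ := (f x - f b) / (f x - f x₀) with hlamdef
        have hlam0 : 0 < lam := div_pos (by linarith) hD
        have hlam1 : lam ≤ 1 := by
          rw [hlamdef, div_le_one hD]; linarith
        have hmem' : (1 - lam) • x + lam • x₀ ∈ interior Xh :=
          hXhconv.combo_self_interior_mem_interior hx hx₀ (by linarith) hlam0 (by ring)
        have hlt := hf _ hmem'
        rw [map_add, _root_.map_smul, _root_.map_smul] at hlt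
        simp only [smul_eq_mul] at hlt
        have hval : (1 - lam) * f x + lam * f x₀ = f b := by
          rw [hlamdef]
          field_simp
          ring
        linarith
      have hle_ae : ∀ᵐ x ∂μ, f x ≤ f b := hmem.mono fun x hx => hfle x (hXXh hx)
      have hfint : Integrable (fun x : E => f x) μ := f.integrable_comp hid
      have hmean : ∫ x, f x ∂μ = f b := by rw [hbdef]; exact f.integral_comp_comm hid
      have heq_ae : ∀ᵐ x ∂μ, f x = f b := by
        have h0 : ∫ x, (f b - f x) ∂μ = 0 := by
          rw [integral_sub (integrable_const _) hfint, hmean, integral_const]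
          simp
        have hnn : 0 ≤ᵐ[μ] fun x => f b - f x := hle_ae.mono fun x hx => by simp [hx]
        have := (integral_eq_zero_iff_of_nonneg_ae hnn
          ((integrable_const _).sub hfint)).mp h0
        refine this.mono fun x hx => ?_
        have : f b - f x = 0 := hx
        linarith
      set X' : Set E := X ∩ {x | f x = f b} with hX'def
      have hset_conv : Convex ℝ {x : E | f x = f b} := by
        intro x hx y hy a c ha hc hac
        simp only [Set.mem_setOf_eq] at hx hy ⊢
        rw [map_add, _root_.map_smul, _root_.map_smul, hx, hy]
        simp only [smul_eq_mul]
        rw [← add_mul, hac, one_mul]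
      have hX'conv : Convex ℝ X' := hXconv.inter hset_conv
      have hX'c : IsClosed X' := hXc.inter (isClosed_eq f.continuous continuous_const)
      have hmem' : ∀ᵐ x ∂μ, x ∈ X' := (hmem.and heq_ae).mono fun x hx => ⟨hx.1, hx.2⟩
      have hg' : ConcaveOn ℝ X' g := hg.subset Set.inter_subset_left hX'conv
      have hrank' : Module.finrank ℝ (vectorSpan ℝ X') ≤ n := by
        have hWle : vectorSpan ℝ X' ≤ V ⊓ LinearMap.ker (f : E →ₗ[ℝ] ℝ) := by
          rw [vectorSpan_def, Submodule.span_le]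
          rintro v ⟨x, hx, y, hy, rfl⟩
          refine ⟨?_, ?_⟩
          · exact vsub_mem_vectorSpan ℝ hx.1 hy.1
          · simp only [SetLike.mem_coe, LinearMap.mem_ker, vsub_eq_sub, map_sub, ContinuousLinearMap.coe_coe]
            rw [hx.2, hy.2, sub_self]
        have hv : ∃ v ∈ V, f v ≠ 0 := by
          by_contra hcon2
          push_neg at hcon2
          have hVperp : ∀ w ∈ Vᗮ, f w = 0 := by
            intro w hw
            have h1 := hfle _ (hperpXh w hw)
            have h2 := hfle _ (hperpXh (-w) (neg_mem hw))
            rw [map_add] at h1 h2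
            rw [map_neg] at h2
            linarith
          have hfzero : ∀ y : E, f y = 0 := by
            intro y
            have hdecomp : y = (V.orthogonalProjectionOnto y : E) +
                (y - (V.orthogonalProjectionOnto y : E)) := by abel
            rw [hdecomp, map_add,
              hcon2 _ (V.orthogonalProjectionOnto y).2,
              hVperp (y - (V.orthogonalProjectionOnto y : E))
                (Submodule.sub_starProjection_mem_orthogonal (K := V) y), add_zero]
          have := hf x₀ hx₀
          rw [hfzero x₀, hfzero b] at this
          exact lt_irrefl _ this
        obtain ⟨v, hvV, hvf⟩ := hv
        have hVlt : V ⊓ LinearMap.ker (f : E →ₗ[ℝ] ℝ) < V := by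
          refine lt_of_le_of_ne inf_le_left fun heq => hvf ?_
          have : v ∈ V ⊓ LinearMap.ker (f : E →ₗ[ℝ] ℝ) := heq.symm ▸ hvV
          exact this.2
        have h1 : Module.finrank ℝ ↥(V ⊓ LinearMap.ker (f : E →ₗ[ℝ] ℝ)) < Module.finrank ℝ ↥V :=
          Submodule.finrank_lt_finrank_of_lt hVlt
        have h2 : Module.finrank ℝ ↥(vectorSpan ℝ X') ≤
            Module.finrank ℝ ↥(V ⊓ LinearMap.ker (f : E →ₗ[ℝ] ℝ)) :=
          Submodule.finrank_mono hWle
        have h3 : Module.finrank ℝ ↥V ≤ n + 1 := hrank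
        omega
      exact ih X' g μ hprob hX'c hX'conv hmem' hid hg' hgi hrank'

end Aux

/-- **EVIs collapse to VIs under concavity of the gap** (Proposition `collapse`):
if `X ⊆ ℝ^d` is nonempty, convex, compact, `F` is Borel measurable and bounded, and
`x ↦ ⟨F(x), x' − x⟩` is concave on `X` for every `x' ∈ X`, then for any `ε`-approximate
EVI solution `μ` the barycenter `x̄ = ∫ x dμ(x)` lies in `X` and is an `ε`-approximate VI
solution. -/
theorem evi_barycenter_vi {d : ℕ} (X : Set (EuclideanSpace ℝ (Fin d)))
    (hXne : X.Nonempty) (hXconv : Convex ℝ X) (hXcomp : IsCompact X)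
    (F : EuclideanSpace ℝ (Fin d) → EuclideanSpace ℝ (Fin d))
    (hFmeas : Measurable F) (B : ℝ) (hFbd : ∀ x ∈ X, ‖F x‖ ≤ B)
    (hconc : ∀ x' ∈ X, ConcaveOn ℝ X (fun x => ⟪F x, x' - x⟫))
    (ε : ℝ) (hε : 0 ≤ ε)
    (μ : Measure (EuclideanSpace ℝ (Fin d))) [IsProbabilityMeasure μ] (hsupp : μ Xᶜ = 0)
    (hEVI : ∀ x' ∈ X, (∫ x, ⟪F x, x' - x⟫ ∂μ) ≥ -ε) :
    (∫ x, x ∂μ) ∈ X ∧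
    ∀ x' ∈ X, ⟪F (∫ x, x ∂μ), x' - (∫ x, x ∂μ)⟫ ≥ -ε := by
  have hmem : ∀ᵐ x ∂μ, x ∈ X := by
    rw [MeasureTheory.ae_iff]
    exact hsupp
  obtain ⟨R, hR⟩ := hXcomp.isBounded.exists_norm_le
  have hid : Integrable (fun x : EuclideanSpace ℝ (Fin d) => x) μ := by
    refine Integrable.mono' (integrable_const R) aestronglyMeasurable_id ?_
    exact hmem.mono fun x hx => hR x hx
  have hBnn : 0 ≤ B := by
    obtain ⟨x, hx⟩ := hXne
    exact le_trans (norm_nonneg _) (hFbd x hx)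
  have hXclosed : IsClosed X := hXcomp.isClosed
  have hbar : (∫ x, x ∂μ) ∈ X := hXconv.integral_mem hXclosed hmem hid
  refine ⟨hbar, ?_⟩
  intro x' hx'
  set g : EuclideanSpace ℝ (Fin d) → ℝ := fun x => ⟪F x, x' - x⟫ with hgdef
  have hgmeas : Measurable g :=
    hFmeas.inner (measurable_const.sub measurable_id)
  have hgbd : ∀ᵐ x ∂μ, ‖g x‖ ≤ B * (R + R) := by
    refine hmem.mono fun x hx => ?_
    have h1 : |⟪F x, x' - x⟫| ≤ ‖F x‖ * ‖x' - x‖ := abs_real_inner_le_norm _ _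
    have h2 : ‖x' - x‖ ≤ R + R := by
      calc ‖x' - x‖ ≤ ‖x'‖ + ‖x‖ := norm_sub_le _ _
        _ ≤ R + R := add_le_add (hR x' hx') (hR x hx)
    have h3 : ‖F x‖ * ‖x' - x‖ ≤ B * (R + R) := by
      apply mul_le_mul (hFbd x hx) h2 (norm_nonneg _) hBnn
    rw [Real.norm_eq_abs]
    exact le_trans h1 h3
  have hgi : Integrable g μ :=
    Integrable.mono' (integrable_const (B * (R + R))) hgmeas.aestronglyMeasurable hgbd
  have hrank : Module.finrank ℝ (vectorSpan ℝ X) ≤ d := by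
    calc Module.finrank ℝ ↥(vectorSpan ℝ X) ≤
        Module.finrank ℝ (EuclideanSpace ℝ (Fin d)) := Submodule.finrank_le _
      _ = d := finrank_euclideanSpace_fin
  have hjensen := jensen_concave_aux d X g μ inferInstance hXclosed hXconv hmem hid
    (hconc x' hx') hgi hrank
  have hEVI' := hEVI x' hx'
  calc (-ε : ℝ) ≤ ∫ x, g x ∂μ := hEVI'
    _ ≤ g (∫ x, x ∂μ) := hjensen
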